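/- Let Q be the 4×4 integer matrix with rows (2,−1,−1,1), (−1,2,0,−1), (−1,0,−2,1), (1,−1,1,−2) and let A be the 4×4 integer matrix with rows (−1,−1,−1,1), (−2,1,0,1), (−1,1,0,1), (0,1,1,0). Then Aᵀ Q A = Q, det A = 1, and the characteristic polynomial of A is X⁴ − 6X² + 1; in particular the eigenvalues of A are ±1±√2. -/

import Mathlib

open Matrix Polynomial

/-- The intersection form of the fiber `F` on `H₂(F) ≅ ℤ⁴`. -/
def Q : Matrix (Fin 4) (Fin 4) ℤ :=
  !![2, -1, -1, 1;
     -1, 2, 0, -1;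
     -1, 0, -2, 1;
     1, -1, 1, -2]

/-- The matrix of the action of the monodromy `φ` on `H₂(F) ≅ ℤ⁴`. -/
def A : Matrix (Fin 4) (Fin 4) ℤ :=
  !![-1, -1, -1, 1;
     -2, 1, 0, 1;
     -1, 1, 0, 1;
     0, 1, 1, 0]

lemma hcm : A.charmatrix =
    !![X + 1, 1, 1, -1;
       2, X - 1, 0, -1;
       1, -1, X, -1;
       0, -1, -1, X] := by
  ext i j
  fin_cases i <;> fin_cases j <;>
    simp [A, Matrix.charmatrix_apply, Matrix.diagonal, Matrix.one_apply,
      Matrix.vecHead, Matrix.vecTail]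

set_option maxHeartbeats 1000000 in
lemma hchar : A.charpoly = X ^ 4 - 6 * X ^ 2 + 1 := by
  rw [Matrix.charpoly, hcm]
  simp [Matrix.det_succ_row_zero, Fin.sum_univ_succ, Fin.succAbove, Fin.castSucc, Fin.castAdd, Fin.castLE, -Fin.val_fin_lt]
  ring

/-- `AᵀQA = Q`, `det A = 1`, and the characteristic polynomial of `A` is `X⁴ − 6X² + 1`;
in particular the eigenvalues of `A` are `±1±√2`. -/
theorem monodromy_H2_properties :
    Aᵀ * Q * A = Q ∧
    A.det = 1 ∧
    A.charpoly = X ^ 4 - 6 * X ^ 2 + 1 ∧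
    (A.map ((↑) : ℤ → ℝ)).charpoly =
      (X - C (1 + Real.sqrt 2)) * (X - C (1 - Real.sqrt 2)) *
      (X - C (-1 + Real.sqrt 2)) * (X - C (-1 - Real.sqrt 2)) := by
  refine ⟨?_, ?_, hchar, ?_⟩
  · decide
  · rw [Matrix.det_eq_sign_charpoly_coeff, hchar]
    norm_num [coeff_add, coeff_sub, coeff_one, coeff_X_pow, Polynomial.coeff_ofNat_mul]
  · have hmap : A.map ((↑) : ℤ → ℝ) = A.map (Int.castRingHom ℝ) := rfl
    rw [hmap, Matrix.charpoly_map, hchar]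
    set s := Real.sqrt 2 with hs
    have hss : s * s = 2 := Real.mul_self_sqrt (by norm_num)
    have hCs : (C s : ℝ[X]) * C s = 2 := by
      rw [← C_mul, hss]; exact map_ofNat C 2
    have e1 : (X - C (1 + s)) * (X - C (1 - s)) = X ^ 2 - 2 * X - 1 := by
      simp only [C_add, C_sub, C_1]
      linear_combination -hCs
    have e2 : (X - C (-1 + s)) * (X - C (-1 - s)) = X ^ 2 + 2 * X - 1 := by
      simp only [C_add, C_sub, C_neg, C_1]
      linear_combination -hCs
    rw [mul_assoc, e2, e1]
    simp only [Polynomial.map_add, Polynomial.map_sub, Polynomial.map_mul,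
      Polynomial.map_pow, Polynomial.map_one, Polynomial.map_ofNat, Polynomial.map_X]
    ring
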